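/- In the graphs G_n(f) built from the unit square (Vicsek-type level when f(n)=0, Sierpiński-carpet-type level when f(n)=1), the effective resistance between corner points satisfies R_{(G_n(f),E_n(f))}(p₁,p₃) ≤ 4·R_{(G_n(f),E_n(f))}({p₁,p₇},{p₃,p₅}) for all n ≥ 0 and all f:ℕ→{0,1}. -/

import Mathlib

open scoped ENNReal

/-- The nine reference points `p₀, …, p₈` of the square `[-1/2,1/2]²` in `ℂ`. -/
noncomputable def pt : ℕ → ℂ
  | 1 => -(1 / 2) - Complex.I / 2
  | 2 => -(Complex.I / 2)
  | 3 => 1 / 2 - Complex.I / 2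
  | 4 => 1 / 2
  | 5 => 1 / 2 + Complex.I / 2
  | 6 => Complex.I / 2
  | 7 => -(1 / 2) + Complex.I / 2
  | 8 => -(1 / 2)
  | _ => 0

/-- The contraction `φ_j(z) = (z - p_j)/3 + p_j`. -/
noncomputable def phi (j : ℕ) (z : ℂ) : ℂ := (z - pt j) / 3 + pt j

/-- The vertex sets `G_n(f)`: a Vicsek-type level when `f n = 0` and a
Sierpiński-carpet-type level when `f n = 1`. -/
noncomputable def Gn (f : ℕ → ℕ) : ℕ → Set ℂ
  | 0 => {pt 0, pt 1, pt 3, pt 5, pt 7}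
  | n + 1 =>
      if f (n + 1) = 0 then ⋃ j ∈ ({0, 1, 3, 5, 7} : Set ℕ), phi j '' Gn f n
      else ⋃ j ∈ ({1, 2, 3, 4, 5, 6, 7, 8} : Set ℕ), phi j '' Gn f n

/-- The edge set `E_n(f)`: pairs of points of `G_n(f)` at Euclidean distance
`3⁻ⁿ · 2^{-1/2}`. -/
noncomputable def En (f : ℕ → ℕ) (n : ℕ) : Set (ℂ × ℂ) :=
  {q | q.1 ∈ Gn f n ∧ q.2 ∈ Gn f n ∧
    ‖q.1 - q.2‖ = (3 : ℝ) ^ (-(n : ℤ)) / Real.sqrt 2}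

/-- Energy `(1/2) Σ_{(x,y) ∈ Ed} (g x - g y)²` with simple (unit) weights. -/
noncomputable def edgeEnergy (Ed : Set (ℂ × ℂ)) (g : ℂ → ℝ) : ℝ≥0∞ :=
  (1 / 2) * ∑' e : Ed, ENNReal.ofReal ((g (e : ℂ × ℂ).1 - g (e : ℂ × ℂ).2) ^ 2)

/-- Effective resistance `R(A,B) = (inf { energy g : g ≡ 1 on A, g ≡ 0 on B })⁻¹`. -/
noncomputable def edgeRes (Ed : Set (ℂ × ℂ)) (A B : Set ℂ) : ℝ≥0∞ :=
  (⨅ (g : ℂ → ℝ) (_ : (∀ a ∈ A, g a = 1) ∧ (∀ b ∈ B, g b = 0)), edgeEnergy Ed g)⁻¹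

/-! ### Auxiliary material -/

/-- Reflection across the vertical axis: `z ↦ -conj z`. -/
noncomputable def sgm (z : ℂ) : ℂ := -((starRingEnd ℂ) z)

lemma sgm_sgm (z : ℂ) : sgm (sgm z) = z := by simp [sgm]

lemma sgm_fix {z : ℂ} (h : z.re = 0) : sgm z = z := by
  simp [sgm, Complex.ext_iff, h]

lemma abs_sgm_sub (x y : ℂ) : ‖sgm x - sgm y‖ = ‖x - y‖ := by
  rw [show sgm x - sgm y = (starRingEnd ℂ) (y - x) by simp [sgm]; ring,
    Complex.norm_conj, norm_sub_rev]

lemma conj_pt0 : (starRingEnd ℂ) (pt 0) = pt 0 := by norm_num [pt]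
lemma conj_pt1 : (starRingEnd ℂ) (pt 1) = pt 7 := by norm_num [pt, Complex.ext_iff, map_ofNat]
lemma conj_pt2 : (starRingEnd ℂ) (pt 2) = pt 6 := by norm_num [pt, Complex.ext_iff, map_ofNat]
lemma conj_pt3 : (starRingEnd ℂ) (pt 3) = pt 5 := by norm_num [pt, Complex.ext_iff, map_ofNat]
lemma conj_pt4 : (starRingEnd ℂ) (pt 4) = pt 4 := by norm_num [pt, Complex.ext_iff, map_ofNat]
lemma conj_pt5 : (starRingEnd ℂ) (pt 5) = pt 3 := by norm_num [pt, Complex.ext_iff, map_ofNat]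
lemma conj_pt6 : (starRingEnd ℂ) (pt 6) = pt 2 := by norm_num [pt, Complex.ext_iff, map_ofNat]
lemma conj_pt7 : (starRingEnd ℂ) (pt 7) = pt 1 := by norm_num [pt, Complex.ext_iff, map_ofNat]
lemma conj_pt8 : (starRingEnd ℂ) (pt 8) = pt 8 := by norm_num [pt, Complex.ext_iff, map_ofNat]
lemma sgm_pt0 : sgm (pt 0) = pt 0 := by norm_num [sgm, pt]
lemma sgm_pt1 : sgm (pt 1) = pt 3 := by norm_num [sgm, pt, Complex.ext_iff, map_ofNat]
lemma sgm_pt2 : sgm (pt 2) = pt 2 := by norm_num [sgm, pt, Complex.ext_iff, map_ofNat]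
lemma sgm_pt3 : sgm (pt 3) = pt 1 := by norm_num [sgm, pt, Complex.ext_iff, map_ofNat]
lemma sgm_pt4 : sgm (pt 4) = pt 8 := by norm_num [sgm, pt, Complex.ext_iff, map_ofNat]
lemma sgm_pt5 : sgm (pt 5) = pt 7 := by norm_num [sgm, pt, Complex.ext_iff, map_ofNat]
lemma sgm_pt6 : sgm (pt 6) = pt 6 := by norm_num [sgm, pt, Complex.ext_iff, map_ofNat]
lemma sgm_pt7 : sgm (pt 7) = pt 5 := by norm_num [sgm, pt, Complex.ext_iff, map_ofNat]
lemma sgm_pt8 : sgm (pt 8) = pt 4 := by norm_num [sgm, pt, Complex.ext_iff, map_ofNat]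

lemma pt_re0 : (pt 0).re = ((0:ℤ):ℝ)/2 := by norm_num [pt]
lemma pt_re1 : (pt 1).re = ((-1:ℤ):ℝ)/2 := by norm_num [pt]
lemma pt_re2 : (pt 2).re = ((0:ℤ):ℝ)/2 := by norm_num [pt]
lemma pt_re3 : (pt 3).re = ((1:ℤ):ℝ)/2 := by norm_num [pt]
lemma pt_re4 : (pt 4).re = ((1:ℤ):ℝ)/2 := by norm_num [pt]
lemma pt_re5 : (pt 5).re = ((1:ℤ):ℝ)/2 := by norm_num [pt]
lemma pt_re6 : (pt 6).re = ((0:ℤ):ℝ)/2 := by norm_num [pt]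
lemma pt_re7 : (pt 7).re = ((-1:ℤ):ℝ)/2 := by norm_num [pt]
lemma pt_re8 : (pt 8).re = ((-1:ℤ):ℝ)/2 := by norm_num [pt]

lemma conj_phi (j j' : ℕ) (h : (starRingEnd ℂ) (pt j) = pt j') (w : ℂ) :
    (starRingEnd ℂ) (phi j w) = phi j' ((starRingEnd ℂ) w) := by
  unfold phi; rw [← h]; simp only [map_add, map_sub, map_div₀, map_ofNat]

lemma sgm_phi (j j' : ℕ) (h : sgm (pt j) = pt j') (w : ℂ) : sgm (phi j w) = phi j' (sgm w) := by
  unfold phi; rw [← h]; simp only [sgm, map_add, map_sub, map_div₀, map_ofNat, map_neg]; ring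

lemma mem_branch {S : Set ℕ} {G : Set ℂ} {m : ℂ → ℂ} {j j' : ℕ} (hj' : j' ∈ S) {w : ℂ}
    (hw : m w ∈ G) (hphi : m (phi j w) = phi j' (m w)) :
    m (phi j w) ∈ ⋃ i ∈ S, phi i '' G :=
  Set.mem_biUnion hj' ⟨m w, hw, hphi.symm⟩

lemma Gn_conj (f : ℕ → ℕ) : ∀ n, ∀ z ∈ Gn f n, (starRingEnd ℂ) z ∈ Gn f n := by
  intro n
  induction n with
  | zero =>
    intro z hz
    simp only [Gn, Set.mem_insert_iff, Set.mem_singleton_iff] at hz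
    rcases hz with rfl|rfl|rfl|rfl|rfl <;>
      simp [Gn, conj_pt0, conj_pt1, conj_pt3, conj_pt5, conj_pt7]
  | succ n ih =>
    intro z hz
    simp only [Gn] at hz ⊢
    split_ifs at hz ⊢ with h0
    · rw [Set.mem_iUnion₂] at hz
      obtain ⟨j, hj, w, hw, rfl⟩ := hz
      simp only [Set.mem_insert_iff, Set.mem_singleton_iff] at hj
      rcases hj with rfl|rfl|rfl|rfl|rfl
      · exact mem_branch (by simp) (ih w hw) (conj_phi 0 0 conj_pt0 w)
      · exact mem_branch (by simp) (ih w hw) (conj_phi 1 7 conj_pt1 w)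
      · exact mem_branch (by simp) (ih w hw) (conj_phi 3 5 conj_pt3 w)
      · exact mem_branch (by simp) (ih w hw) (conj_phi 5 3 conj_pt5 w)
      · exact mem_branch (by simp) (ih w hw) (conj_phi 7 1 conj_pt7 w)
    · rw [Set.mem_iUnion₂] at hz
      obtain ⟨j, hj, w, hw, rfl⟩ := hz
      simp only [Set.mem_insert_iff, Set.mem_singleton_iff] at hj
      rcases hj with rfl|rfl|rfl|rfl|rfl|rfl|rfl|rfl
      · exact mem_branch (by simp) (ih w hw) (conj_phi 1 7 conj_pt1 w)
      · exact mem_branch (by simp) (ih w hw) (conj_phi 2 6 conj_pt2 w)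
      · exact mem_branch (by simp) (ih w hw) (conj_phi 3 5 conj_pt3 w)
      · exact mem_branch (by simp) (ih w hw) (conj_phi 4 4 conj_pt4 w)
      · exact mem_branch (by simp) (ih w hw) (conj_phi 5 3 conj_pt5 w)
      · exact mem_branch (by simp) (ih w hw) (conj_phi 6 2 conj_pt6 w)
      · exact mem_branch (by simp) (ih w hw) (conj_phi 7 1 conj_pt7 w)
      · exact mem_branch (by simp) (ih w hw) (conj_phi 8 8 conj_pt8 w)

lemma Gn_sgm (f : ℕ → ℕ) : ∀ n, ∀ z ∈ Gn f n, sgm z ∈ Gn f n := by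
  intro n
  induction n with
  | zero =>
    intro z hz
    simp only [Gn, Set.mem_insert_iff, Set.mem_singleton_iff] at hz
    rcases hz with rfl|rfl|rfl|rfl|rfl <;>
      simp [Gn, sgm_pt0, sgm_pt1, sgm_pt3, sgm_pt5, sgm_pt7]
  | succ n ih =>
    intro z hz
    simp only [Gn] at hz ⊢
    split_ifs at hz ⊢ with h0
    · rw [Set.mem_iUnion₂] at hz
      obtain ⟨j, hj, w, hw, rfl⟩ := hz
      simp only [Set.mem_insert_iff, Set.mem_singleton_iff] at hj
      rcases hj with rfl|rfl|rfl|rfl|rfl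
      · exact mem_branch (by simp) (ih w hw) (sgm_phi 0 0 sgm_pt0 w)
      · exact mem_branch (by simp) (ih w hw) (sgm_phi 1 3 sgm_pt1 w)
      · exact mem_branch (by simp) (ih w hw) (sgm_phi 3 1 sgm_pt3 w)
      · exact mem_branch (by simp) (ih w hw) (sgm_phi 5 7 sgm_pt5 w)
      · exact mem_branch (by simp) (ih w hw) (sgm_phi 7 5 sgm_pt7 w)
    · rw [Set.mem_iUnion₂] at hz
      obtain ⟨j, hj, w, hw, rfl⟩ := hz
      simp only [Set.mem_insert_iff, Set.mem_singleton_iff] at hj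
      rcases hj with rfl|rfl|rfl|rfl|rfl|rfl|rfl|rfl
      · exact mem_branch (by simp) (ih w hw) (sgm_phi 1 3 sgm_pt1 w)
      · exact mem_branch (by simp) (ih w hw) (sgm_phi 2 2 sgm_pt2 w)
      · exact mem_branch (by simp) (ih w hw) (sgm_phi 3 1 sgm_pt3 w)
      · exact mem_branch (by simp) (ih w hw) (sgm_phi 4 8 sgm_pt4 w)
      · exact mem_branch (by simp) (ih w hw) (sgm_phi 5 7 sgm_pt5 w)
      · exact mem_branch (by simp) (ih w hw) (sgm_phi 6 6 sgm_pt6 w)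
      · exact mem_branch (by simp) (ih w hw) (sgm_phi 7 5 sgm_pt7 w)
      · exact mem_branch (by simp) (ih w hw) (sgm_phi 8 4 sgm_pt8 w)

lemma phi_re (j : ℕ) (w : ℂ) : (phi j w).re = w.re/3 + 2/3 * (pt j).re := by
  simp [phi, Complex.div_re, Complex.normSq]; ring

lemma re_step {n : ℕ} {w : ℂ} (k : ℤ) (hw : w.re = (k:ℝ) * ((3:ℝ)^(-(n:ℤ)) / 2)) (j : ℕ)
    (ε : ℤ) (hj : (pt j).re = (ε : ℝ)/2) :
    ∃ k' : ℤ, (phi j w).re = (k':ℝ) * ((3:ℝ)^(-((n+1:ℕ) : ℤ)) / 2) := by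
  refine ⟨k + ε * 2 * 3^n, ?_⟩
  have h3 : (3:ℝ) ≠ 0 := by norm_num
  have hTn : (3:ℝ)^(n:ℕ) * (3:ℝ)^(-(n:ℤ)) = 1 := by
    rw [← zpow_natCast (3:ℝ) n, ← zpow_add₀ h3]; simp
  have hE : (3:ℝ)^(-((n+1:ℕ):ℤ)) = (3:ℝ)^(-(n:ℤ)) / 3 := by
    push_cast
    rw [neg_add, zpow_add₀ h3]
    norm_num
    ring
  rw [phi_re, hw, hj, hE]
  push_cast
  linear_combination (-(ε:ℝ)/3) * hTn

lemma Gn_re (f : ℕ → ℕ) : ∀ n, ∀ z ∈ Gn f n, ∃ k : ℤ, z.re = (k:ℝ) * ((3:ℝ)^(-(n:ℤ)) / 2) := by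
  intro n
  induction n with
  | zero =>
    intro z hz
    simp only [Gn, Set.mem_insert_iff, Set.mem_singleton_iff] at hz
    rcases hz with rfl|rfl|rfl|rfl|rfl
    exacts [⟨0, by norm_num [pt]⟩, ⟨-1, by norm_num [pt]⟩, ⟨1, by norm_num [pt]⟩,
      ⟨1, by norm_num [pt]⟩, ⟨-1, by norm_num [pt]⟩]
  | succ n ih =>
    intro z hz
    simp only [Gn] at hz
    split_ifs at hz with h0 <;>
    · rw [Set.mem_iUnion₂] at hz
      obtain ⟨j, hj, w, hw, rfl⟩ := hz
      obtain ⟨k, hk⟩ := ih w hw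
      simp only [Set.mem_insert_iff, Set.mem_singleton_iff] at hj
      rcases hj with rfl|rfl|rfl|rfl|rfl|rfl|rfl|rfl <;>
        first
          | exact re_step k hk _ 0 pt_re0
          | exact re_step k hk _ (-1) pt_re1
          | exact re_step k hk _ 0 pt_re2
          | exact re_step k hk _ 1 pt_re3
          | exact re_step k hk _ 1 pt_re4
          | exact re_step k hk _ 1 pt_re5
          | exact re_step k hk _ 0 pt_re6
          | exact re_step k hk _ (-1) pt_re7
          | exact re_step k hk _ (-1) pt_re8

/-- No edge of `E_n(f)` crosses the vertical axis. -/
lemma En_side {f : ℕ → ℕ} {n : ℕ} {x y : ℂ} (h : (x, y) ∈ En f n) :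
    (x.re ≤ 0 ∧ y.re ≤ 0) ∨ (0 ≤ x.re ∧ 0 ≤ y.re) := by
  obtain ⟨hx', hy', habs⟩ := h
  obtain ⟨k, hk⟩ := Gn_re f n x hx'
  obtain ⟨l, hl⟩ := Gn_re f n y hy'
  set T : ℝ := (3:ℝ)^(-(n:ℤ)) with hT
  have hTpos : 0 < T := by positivity
  have hs2 : (1:ℝ) < Real.sqrt 2 := by
    nlinarith [Real.sq_sqrt (by norm_num : (0:ℝ) ≤ 2), Real.sqrt_nonneg 2]
  have hre : |x.re - y.re| < T := by
    have h1 : |(x - y).re| ≤ ‖x - y‖ := Complex.abs_re_le_norm _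
    rw [Complex.sub_re, habs] at h1
    calc |x.re - y.re| ≤ T / Real.sqrt 2 := h1
      _ < T := div_lt_self hTpos hs2
  have key : ∀ (a b : ℤ), (a:ℝ)*(T/2) < 0 → 0 < (b:ℝ)*(T/2) →
      ¬ |(a:ℝ)*(T/2) - (b:ℝ)*(T/2)| < T := by
    intro a b ha hb habs2
    have ha0 : a < 0 := by
      by_contra h
      push_neg at h
      have : (0:ℝ) ≤ (a:ℝ) := by exact_mod_cast h
      nlinarith
    have hb0 : 0 < b := by
      by_contra h
      push_neg at h
      have : (b:ℝ) ≤ 0 := by exact_mod_cast h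
      nlinarith
    have ha1 : (a:ℝ) ≤ -1 := by exact_mod_cast (by omega : a ≤ -1)
    have hb1 : (1:ℝ) ≤ (b:ℝ) := by exact_mod_cast (by omega : (1:ℤ) ≤ b)
    have := abs_lt.mp habs2
    nlinarith
  rcases lt_trichotomy x.re 0 with hx | hx | hx
  · left
    refine ⟨le_of_lt hx, ?_⟩
    by_contra hy
    push_neg at hy
    exact key k l (hk ▸ hx) (hl ▸ hy) (by rw [← hk, ← hl]; exact hre)
  · rcases le_or_gt y.re 0 with hy | hy
    · exact Or.inl ⟨le_of_eq hx, hy⟩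
    · exact Or.inr ⟨ge_of_eq hx, le_of_lt hy⟩
  · right
    refine ⟨le_of_lt hx, ?_⟩
    by_contra hy
    push_neg at hy
    exact key l k (hl ▸ hy) (hk ▸ hx) (by rw [← hk, ← hl, abs_sub_comm]; exact hre)

/-! ### Energy lemmas -/

lemma energy_mono {Ed : Set (ℂ × ℂ)} {u w : ℂ → ℝ}
    (h : ∀ x y, (x,y) ∈ Ed → (w x - w y)^2 ≤ (u x - u y)^2) :
    edgeEnergy Ed w ≤ edgeEnergy Ed u := by
  unfold edgeEnergy
  refine mul_le_mul_right (ENNReal.tsum_le_tsum fun e => ENNReal.ofReal_le_ofReal ?_) _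
  exact h _ _ (by rw [Prod.mk.eta]; exact e.2)

lemma energy_two {Ed : Set (ℂ × ℂ)} {u v w : ℂ → ℝ} {c : ℝ} (hc : 0 ≤ c)
    (h : ∀ x y, (x,y) ∈ Ed → (w x - w y)^2 ≤ c * ((u x - u y)^2 + (v x - v y)^2)) :
    edgeEnergy Ed w ≤ ENNReal.ofReal c * (edgeEnergy Ed u + edgeEnergy Ed v) := by
  unfold edgeEnergy
  have heq : ENNReal.ofReal c * ((1/2) * ∑' e : Ed, ENNReal.ofReal ((u (e : ℂ × ℂ).1 - u (e : ℂ × ℂ).2) ^ 2)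
      + (1/2) * ∑' e : Ed, ENNReal.ofReal ((v (e : ℂ × ℂ).1 - v (e : ℂ × ℂ).2) ^ 2))
      = (1/2) * (ENNReal.ofReal c *
        (∑' e : Ed, ENNReal.ofReal ((u (e : ℂ × ℂ).1 - u (e : ℂ × ℂ).2) ^ 2)
        + ∑' e : Ed, ENNReal.ofReal ((v (e : ℂ × ℂ).1 - v (e : ℂ × ℂ).2) ^ 2))) := by ring
  rw [heq]
  refine mul_le_mul_right ?_ _
  rw [← ENNReal.tsum_add, ← ENNReal.tsum_mul_left]
  refine ENNReal.tsum_le_tsum fun e => ?_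
  rw [← ENNReal.ofReal_add (by positivity) (by positivity), ← ENNReal.ofReal_mul hc]
  exact ENNReal.ofReal_le_ofReal (h _ _ (by rw [Prod.mk.eta]; exact e.2))

lemma energy_comp (Ed : Set (ℂ × ℂ)) (m : ℂ → ℂ) (hm : ∀ z, m (m z) = z)
    (hEd : ∀ p ∈ Ed, (m p.1, m p.2) ∈ Ed) (u : ℂ → ℝ) :
    edgeEnergy Ed (fun z => u (m z)) = edgeEnergy Ed u := by
  unfold edgeEnergy
  congr 1
  let e : Ed ≃ Ed :=
    { toFun := fun p => ⟨(m p.1.1, m p.1.2), hEd _ p.2⟩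
      invFun := fun p => ⟨(m p.1.1, m p.1.2), hEd _ p.2⟩
      left_inv := fun p => by ext <;> simp [hm]
      right_inv := fun p => by ext <;> simp [hm] }
  exact e.tsum_eq (fun p => ENNReal.ofReal ((u (p : ℂ × ℂ).1 - u (p : ℂ × ℂ).2)^2))

/-! ### Elementary real inequalities -/

lemma sq_max_sub (a b c : ℝ) : (max a c - max b c)^2 ≤ (a - b)^2 := by
  rcases le_total a c with h1 | h1 <;> rcases le_total b c with h2 | h2 <;>
    simp [max_eq_left, max_eq_right, h1, h2] <;> nlinarith

lemma sq_min_sub (a b c : ℝ) : (min a c - min b c)^2 ≤ (a - b)^2 := by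
  rcases le_total a c with h1 | h1 <;> rcases le_total b c with h2 | h2 <;>
    simp [min_eq_left, min_eq_right, h1, h2] <;> nlinarith

lemma sq_clamp_sub (a b : ℝ) : (max (min a 1) 0 - max (min b 1) 0)^2 ≤ (a - b)^2 :=
  le_trans (sq_max_sub (min a 1) (min b 1) 0) (sq_min_sub a b 1)

/-! ### The three transformations of a test function -/

/-- Antisymmetrization across the vertical axis. -/
noncomputable def avg (g : ℂ → ℝ) : ℂ → ℝ := fun z => (g z + (1 - g (sgm z))) / 2

/-- Folding toward `1/2` on each side of the vertical axis. -/
noncomputable def fold (g : ℂ → ℝ) : ℂ → ℝ :=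
  fun z => if z.re < 0 then max (g z) (1/2) else min (g z) (1/2)

/-- The clipped sum `(g + g∘conj - g(p₅)) ∧ 1 ∨ 0`. -/
noncomputable def clampSum (g : ℂ → ℝ) : ℂ → ℝ :=
  fun z => max (min (g z + g ((starRingEnd ℂ) z) - g (pt 5)) 1) 0

lemma avg_axis (g : ℂ → ℝ) {z : ℂ} (h : z.re = 0) : avg g z = 1/2 := by
  simp only [avg, sgm_fix h]; ring

lemma fold_max {g : ℂ → ℝ} (hax : ∀ z : ℂ, z.re = 0 → g z = 1/2) {z : ℂ} (hz : z.re ≤ 0) :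
    fold g z = max (g z) (1/2) := by
  rcases lt_or_eq_of_le hz with h | h
  · simp only [fold, if_pos h]
  · simp only [fold, if_neg (show ¬ z.re < 0 by rw [h]; exact lt_irrefl 0), hax z h]
    norm_num

lemma fold_min {g : ℂ → ℝ} {z : ℂ} (hz : 0 ≤ z.re) : fold g z = min (g z) (1/2) := by
  simp only [fold, if_neg (not_lt.mpr hz)]

lemma fold_sq {g : ℂ → ℝ} (hax : ∀ z : ℂ, z.re = 0 → g z = 1/2) {x y : ℂ}
    (hside : (x.re ≤ 0 ∧ y.re ≤ 0) ∨ (0 ≤ x.re ∧ 0 ≤ y.re)) :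
    (fold g x - fold g y)^2 ≤ (g x - g y)^2 := by
  rcases hside with ⟨hx, hy⟩ | ⟨hx, hy⟩
  · rw [fold_max hax hx, fold_max hax hy]
    exact sq_max_sub _ _ _
  · rw [fold_min hx, fold_min hy]
    exact sq_min_sub _ _ _

/-- In the graphs `(G_n(f), E_n(f))` with simple weights, for every
`n ≥ 0` and every `f : ℕ → {0,1}`,
`R(p₁, p₃) ≤ 4 · R({p₁, p₇}, {p₃, p₅})`. -/
theorem stmt_11 (f : ℕ → ℕ) (hf : ∀ n, f n = 0 ∨ f n = 1) (n : ℕ) :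
    edgeRes (En f n) {pt 1} {pt 3} ≤ 4 * edgeRes (En f n) {pt 1, pt 7} {pt 3, pt 5} := by
  classical
  set Ed := En f n with hEdDef
  have hconjEd : ∀ p ∈ Ed, ((starRingEnd ℂ) p.1, (starRingEnd ℂ) p.2) ∈ Ed := by
    rintro ⟨x, y⟩ ⟨hx, hy, habs⟩
    exact ⟨Gn_conj f n x hx, Gn_conj f n y hy, by rw [← map_sub, Complex.norm_conj]; exact habs⟩
  have hsgmEd : ∀ p ∈ Ed, (sgm p.1, sgm p.2) ∈ Ed := by
    rintro ⟨x, y⟩ ⟨hx, hy, habs⟩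
    exact ⟨Gn_sgm f n x hx, Gn_sgm f n y hy, by rw [abs_sgm_sub]; exact habs⟩
  -- the two infima
  set I1 := ⨅ (g : ℂ → ℝ) (_ : (∀ a ∈ ({pt 1} : Set ℂ), g a = 1) ∧
    (∀ b ∈ ({pt 3} : Set ℂ), g b = 0)), edgeEnergy Ed g with hI1
  set I2 := ⨅ (g : ℂ → ℝ) (_ : (∀ a ∈ ({pt 1, pt 7} : Set ℂ), g a = 1) ∧
    (∀ b ∈ ({pt 3, pt 5} : Set ℂ), g b = 0)), edgeEnergy Ed g with hI2
  have key : ∀ g : ℂ → ℝ, ((∀ a ∈ ({pt 1} : Set ℂ), g a = 1) ∧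
      (∀ b ∈ ({pt 3} : Set ℂ), g b = 0)) → I2 ≤ 4 * edgeEnergy Ed g := by
    intro g hg
    have hg1 : g (pt 1) = 1 := hg.1 _ rfl
    have hg3 : g (pt 3) = 0 := hg.2 _ rfl
    -- the symmetrized function
    have hax : ∀ z : ℂ, z.re = 0 → avg g z = 1/2 := fun z hz => avg_axis g hz
    have havg1 : avg g (pt 1) = 1 := by simp only [avg, sgm_pt1, hg1, hg3]; norm_num
    have havg3 : avg g (pt 3) = 0 := by simp only [avg, sgm_pt3, hg1, hg3]; norm_num
    -- folded function g3
    set g3 : ℂ → ℝ := fold (avg g) with hg3def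
    have hre1 : (pt 1).re < 0 := by norm_num [pt]
    have hre3 : (0:ℝ) ≤ (pt 3).re := by norm_num [pt]
    have hre5 : (0:ℝ) ≤ (pt 5).re := by norm_num [pt]
    have hre7 : (pt 7).re ≤ 0 := by norm_num [pt]
    have hg31 : g3 (pt 1) = 1 := by
      rw [hg3def, fold_max hax (le_of_lt hre1), havg1]; norm_num
    have hg33 : g3 (pt 3) = 0 := by
      rw [hg3def, fold_min hre3, havg3]; norm_num
    have hg37 : 1/2 ≤ g3 (pt 7) := by
      rw [hg3def, fold_max hax hre7]; exact le_max_right _ _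
    have hg35 : g3 (pt 5) ≤ 1/2 := by
      rw [hg3def, fold_min hre5]; exact min_le_right _ _
    -- the test function for the pair problem
    set H : ℂ → ℝ := clampSum g3 with hHdef
    have hH1 : H (pt 1) = 1 := by
      rw [hHdef]
      simp only [clampSum, conj_pt1, hg31]
      rw [min_eq_right (by linarith), max_eq_left (by norm_num)]
    have hH7 : H (pt 7) = 1 := by
      rw [hHdef]
      simp only [clampSum, conj_pt7, hg31]
      rw [min_eq_right (by linarith), max_eq_left (by norm_num)]
    have hH3 : H (pt 3) = 0 := by
      rw [hHdef]
      simp only [clampSum, conj_pt3, hg33]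
      rw [show (0:ℝ) + g3 (pt 5) - g3 (pt 5) = 0 by ring,
        min_eq_left (by norm_num), max_eq_right le_rfl]
    have hH5 : H (pt 5) = 0 := by
      rw [hHdef]
      simp only [clampSum, conj_pt5, hg33]
      rw [show g3 (pt 5) + 0 - g3 (pt 5) = 0 by ring,
        min_eq_left (by norm_num), max_eq_right le_rfl]
    -- admissibility of H
    have hHadm : (∀ a ∈ ({pt 1, pt 7} : Set ℂ), H a = 1) ∧
        (∀ b ∈ ({pt 3, pt 5} : Set ℂ), H b = 0) := by
      constructor
      · intro a ha
        rcases ha with rfl | ha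
        · exact hH1
        · rw [Set.mem_singleton_iff] at ha; rw [ha]; exact hH7
      · intro b hb
        rcases hb with rfl | hb
        · exact hH3
        · rw [Set.mem_singleton_iff] at hb; rw [hb]; exact hH5
    -- energy estimates
    have Esgm : edgeEnergy Ed (fun z => g (sgm z)) = edgeEnergy Ed g :=
      energy_comp Ed sgm sgm_sgm hsgmEd g
    have E2 : edgeEnergy Ed (avg g) ≤ edgeEnergy Ed g := by
      have h := energy_two (Ed := Ed) (u := g) (v := fun z => g (sgm z)) (w := avg g)
        (c := 1/2) (by norm_num) ?_
      · rw [Esgm] at h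
        refine h.trans (le_of_eq ?_)
        rw [← two_mul, ← mul_assoc,
          show (2:ℝ≥0∞) = ENNReal.ofReal 2 from (ENNReal.ofReal_ofNat 2).symm,
          ← ENNReal.ofReal_mul (by norm_num)]
        norm_num
      · intro x y _
        simp only [avg]
        nlinarith [sq_nonneg ((g x - g y) - (g (sgm x) - g (sgm y))),
          sq_nonneg ((g x - g y) + (g (sgm x) - g (sgm y)))]
    have E3 : edgeEnergy Ed g3 ≤ edgeEnergy Ed (avg g) := by
      rw [hg3def]
      exact energy_mono fun x y hxy => fold_sq hax (En_side hxy)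
    have Econj : edgeEnergy Ed (fun z => g3 ((starRingEnd ℂ) z)) = edgeEnergy Ed g3 :=
      energy_comp Ed (starRingEnd ℂ) (fun z => Complex.conj_conj z) hconjEd g3
    have E4 : edgeEnergy Ed H ≤ 4 * edgeEnergy Ed g3 := by
      have h := energy_two (Ed := Ed) (u := g3) (v := fun z => g3 ((starRingEnd ℂ) z))
        (w := H) (c := 2) (by norm_num) ?_
      · rw [Econj] at h
        refine h.trans (le_of_eq ?_)
        rw [← two_mul, ← mul_assoc, ENNReal.ofReal_ofNat]
        norm_num
      · intro x y _
        have h1 : (H x - H y)^2 ≤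
            ((g3 x + g3 ((starRingEnd ℂ) x) - g3 (pt 5)) -
             (g3 y + g3 ((starRingEnd ℂ) y) - g3 (pt 5)))^2 := by
          rw [hHdef]
          exact sq_clamp_sub _ _
        nlinarith [sq_nonneg ((g3 x - g3 y) - (g3 ((starRingEnd ℂ) x) - g3 ((starRingEnd ℂ) y)))]
    calc I2 ≤ edgeEnergy Ed H := iInf₂_le H hHadm
      _ ≤ 4 * edgeEnergy Ed g3 := E4
      _ ≤ 4 * edgeEnergy Ed g := by
          exact mul_le_mul_right (E3.trans E2) _
  -- conclude
  have h1 : (4:ℝ≥0∞)⁻¹ * I2 ≤ I1 := by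
    refine le_iInf₂ fun g hg => ?_
    calc (4:ℝ≥0∞)⁻¹ * I2 ≤ 4⁻¹ * (4 * edgeEnergy Ed g) := mul_le_mul_right (key g hg) _
      _ = edgeEnergy Ed g := by
          rw [← mul_assoc, ENNReal.inv_mul_cancel (by norm_num) (by norm_num), one_mul]
  show I1⁻¹ ≤ 4 * I2⁻¹
  calc I1⁻¹ ≤ ((4:ℝ≥0∞)⁻¹ * I2)⁻¹ := ENNReal.inv_le_inv.mpr h1
    _ = 4 * I2⁻¹ := by
        rw [ENNReal.mul_inv (Or.inl (by norm_num)) (Or.inl (by norm_num)), inv_inv]
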